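/- As λ₁ → ∞, the quantity s = λ₁^{1/2} · (1 − λ₁^{-1} − √(1 − λ₁^{-1} + λ₁^{-2})) satisfies s = −λ₁^{-1/2}/2 + O(λ₁^{-3/2}); in particular, if e is the unit eigenvector (1, s)ᵀ/√(1+s²) of the matrix A = diag(λ₁,1) + √diag(λ₁,1)·(1,1)(1,1)ᵀ·√diag(λ₁,1) corresponding to its largest eigenvalue, then the second coordinate of e satisfies |[e]₂| · √λ₁ → 1/2 as λ₁ → ∞. -/

import Mathlib

open Filter

/-- `s(λ₁) = √λ₁ · (1 − λ₁⁻¹ − √(1 − λ₁⁻¹ + λ₁⁻²))`. -/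
noncomputable def sFun (l : ℝ) : ℝ :=
  Real.sqrt l * (1 - l⁻¹ - Real.sqrt (1 - l⁻¹ + l⁻¹ ^ 2))

noncomputable def dFun (l : ℝ) : ℝ :=
  (1 - l⁻¹) + Real.sqrt (1 - l⁻¹ + l⁻¹ ^ 2)

lemma sqrt_lb {l : ℝ} (hl : (2:ℝ) ≤ l) :
    (1 - l⁻¹ : ℝ) ≤ Real.sqrt (1 - l⁻¹ + l⁻¹ ^ 2) := by
  have hl0 : (0:ℝ) < l := by linarith
  have ht0 : 0 < l⁻¹ := inv_pos.mpr hl0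
  have ht : l⁻¹ ≤ 1/2 := by
    rw [inv_le_comm₀ hl0 (by norm_num)]; linarith
  have hsq : Real.sqrt (1 - l⁻¹ + l⁻¹ ^ 2) ^ 2 = 1 - l⁻¹ + l⁻¹ ^ 2 :=
    Real.sq_sqrt (by nlinarith)
  nlinarith [Real.sqrt_nonneg (1 - l⁻¹ + l⁻¹ ^ 2)]

lemma sqrt_ub {l : ℝ} (hl : (2:ℝ) ≤ l) :
    Real.sqrt (1 - l⁻¹ + l⁻¹ ^ 2) ≤ 1 := by
  have hl0 : (0:ℝ) < l := by linarith
  have ht0 : 0 < l⁻¹ := inv_pos.mpr hl0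
  have ht : l⁻¹ ≤ 1/2 := by
    rw [inv_le_comm₀ hl0 (by norm_num)]; linarith
  calc Real.sqrt (1 - l⁻¹ + l⁻¹ ^ 2) ≤ Real.sqrt 1 :=
        Real.sqrt_le_sqrt (by nlinarith)
    _ = 1 := Real.sqrt_one

lemma dFun_pos {l : ℝ} (hl : (2:ℝ) ≤ l) : 1 ≤ dFun l := by
  have hl0 : (0:ℝ) < l := by linarith
  have ht : l⁻¹ ≤ 1/2 := by
    rw [inv_le_comm₀ hl0 (by norm_num)]; linarith
  have := sqrt_lb hl
  unfold dFun
  nlinarith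

lemma sFun_eq {l : ℝ} (hl : (2:ℝ) ≤ l) :
    sFun l = -(Real.sqrt l)⁻¹ / dFun l := by
  have hl0 : (0:ℝ) < l := by linarith
  have hD : (0:ℝ) < dFun l := lt_of_lt_of_le one_pos (dFun_pos hl)
  have hsq : Real.sqrt (1 - l⁻¹ + l⁻¹ ^ 2) ^ 2 = 1 - l⁻¹ + l⁻¹ ^ 2 :=
    Real.sq_sqrt (by nlinarith [sq_nonneg (l⁻¹ - 1/2), inv_pos.mpr hl0])
  have hs : Real.sqrt l * Real.sqrt l = l := Real.mul_self_sqrt hl0.le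
  have hinv : (Real.sqrt l)⁻¹ = Real.sqrt l * l⁻¹ := by
    rw [← hs]; field_simp
    rw [Real.sq_sqrt (sq_nonneg (Real.sqrt l))]
  rw [eq_div_iff hD.ne', sFun, dFun, hinv]
  linear_combination (-Real.sqrt l) * hsq

theorem example_dim_two_asymptotics :
    (∃ M lam₀ : ℝ, ∀ l : ℝ, lam₀ ≤ l →
      |sFun l - (-(Real.sqrt l)⁻¹ / 2)| ≤ M * l ^ (-(3 : ℝ) / 2)) ∧
    Tendsto (fun l : ℝ => |sFun l / Real.sqrt (1 + sFun l ^ 2)| * Real.sqrt l)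
      atTop (nhds (1 / 2)) := by
  constructor
  · refine ⟨1, 2, fun l hl => ?_⟩
    have hl0 : (0:ℝ) < l := by linarith
    have hD1 : (1:ℝ) ≤ dFun l := dFun_pos hl
    have hD : (0:ℝ) < dFun l := lt_of_lt_of_le one_pos hD1
    have hs0 : (0:ℝ) < Real.sqrt l := Real.sqrt_pos.mpr hl0
    have ht0 : (0:ℝ) < l⁻¹ := inv_pos.mpr hl0
    have hDd : |dFun l - 2| ≤ 2 * l⁻¹ := by
      have h1 := sqrt_lb hl
      have h2 := sqrt_ub hl
      rw [abs_le]; unfold dFun at *; constructor <;> nlinarith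
    rw [sFun_eq hl]
    have key : -(Real.sqrt l)⁻¹ / dFun l - (-(Real.sqrt l)⁻¹ / 2) =
        (Real.sqrt l)⁻¹ * ((dFun l - 2) / (2 * dFun l)) := by
      field_simp; ring
    rw [key, abs_mul, abs_div]
    have h1 : |(Real.sqrt l)⁻¹| = (Real.sqrt l)⁻¹ := abs_of_pos (by positivity)
    have h2 : |2 * dFun l| = 2 * dFun l := abs_of_pos (by positivity)
    rw [h1, h2]
    have hbound : (Real.sqrt l)⁻¹ * (|dFun l - 2| / (2 * dFun l)) ≤
        (Real.sqrt l)⁻¹ * l⁻¹ := by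
      apply mul_le_mul_of_nonneg_left _ (by positivity)
      rw [div_le_iff₀ (by positivity)]
      calc |dFun l - 2| ≤ 2 * l⁻¹ := hDd
        _ ≤ l⁻¹ * (2 * dFun l) := by nlinarith
    refine hbound.trans ?_
    have hrw : l ^ (-(3:ℝ)/2) = (Real.sqrt l)⁻¹ * l⁻¹ := by
      rw [Real.sqrt_eq_rpow, ← Real.rpow_neg hl0.le,
        show l⁻¹ = l ^ (-1:ℝ) by rw [Real.rpow_neg_one],
        ← Real.rpow_add hl0]
      norm_num
    rw [hrw, one_mul]
  · -- Tendsto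
    have htinv : Tendsto (fun l : ℝ => l⁻¹) atTop (nhds 0) := tendsto_inv_atTop_zero
    have hcont : Continuous fun t : ℝ => (1 - t) + Real.sqrt (1 - t + t ^ 2) := by
      continuity
    have hD : Tendsto dFun atTop (nhds 2) := by
      have h := (hcont.tendsto 0).comp htinv
      have heq : ((fun t : ℝ => (1 - t) + Real.sqrt (1 - t + t ^ 2)) ∘
          fun l : ℝ => l⁻¹) = dFun := by
        funext l; simp [dFun, Function.comp]
      rw [heq] at h
      rw [show (1:ℝ) - 0 + Real.sqrt (1 - 0 + 0 ^ 2) = 2 by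
        rw [show (1:ℝ) - 0 + 0 ^ 2 = 1 by norm_num, Real.sqrt_one]; norm_num] at h
      exact h
    have hsq_at : Tendsto Real.sqrt atTop atTop := by
      have h := tendsto_rpow_atTop (show (0:ℝ) < 1/2 by norm_num)
      refine h.congr' ?_
      filter_upwards [eventually_ge_atTop (0:ℝ)] with x hx
      exact (Real.sqrt_eq_rpow x).symm
    have hsinv : Tendsto (fun l : ℝ => (Real.sqrt l)⁻¹) atTop (nhds 0) :=
      Tendsto.comp tendsto_inv_atTop_zero hsq_at
    have hsf : Tendsto sFun atTop (nhds 0) := by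
      have h := Tendsto.div (hsinv.neg) hD (by norm_num)
      have h0 : Tendsto (fun l : ℝ => -(Real.sqrt l)⁻¹ / dFun l) atTop (nhds 0) := by
        rw [neg_zero, zero_div] at h; exact h
      refine h0.congr' ?_
      filter_upwards [eventually_ge_atTop (2:ℝ)] with l hl
      exact (sFun_eq hl).symm
    have hden : Tendsto (fun l : ℝ => Real.sqrt (1 + sFun l ^ 2)) atTop (nhds 1) := by
      have h1 : Tendsto (fun l : ℝ => 1 + sFun l ^ 2) atTop (nhds 1) := by
        have := (hsf.pow 2)
        simpa using (tendsto_const_nhds.add this)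
      have := (Real.continuous_sqrt.tendsto 1).comp h1
      simp only [Real.sqrt_one, Function.comp_def] at this; exact this
    have hg : Tendsto (fun l : ℝ => (dFun l)⁻¹ / Real.sqrt (1 + sFun l ^ 2))
        atTop (nhds (1/2)) := by
      have := Tendsto.div (hD.inv₀ (by norm_num)) hden (by norm_num)
      rw [div_one] at this; rw [one_div]; exact this
    refine hg.congr' ?_
    filter_upwards [eventually_ge_atTop (2:ℝ)] with l hl
    have hl0 : (0:ℝ) < l := by linarith
    have hD1 : (1:ℝ) ≤ dFun l := dFun_pos hl
    have hDpos : (0:ℝ) < dFun l := lt_of_lt_of_le one_pos hD1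
    have hs0 : (0:ℝ) < Real.sqrt l := Real.sqrt_pos.mpr hl0
    have hsqp : (0:ℝ) < Real.sqrt (1 + sFun l ^ 2) := Real.sqrt_pos.mpr (by positivity)
    have habs : |sFun l| = (Real.sqrt l)⁻¹ / dFun l := by
      rw [sFun_eq hl, abs_div, abs_neg, abs_of_pos (by positivity : (0:ℝ) < (Real.sqrt l)⁻¹),
        abs_of_pos hDpos]
    rw [abs_div, habs, abs_of_pos hsqp]
    field_simp
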